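/- For every n ∈ ℕ and every real u, the identity Σ_{j=0}^n binom(n,j) u^j (1−u)^{n−j} F(j) = Σ_{k=0}^n ((−1)^k/(k+1)) binom(2k,k) binom(n,k) (u/2)^k holds; that is, the expectation of F at a binomial B(n,u) random variable equals the right-hand side. -/

import Mathlib

/-- `F(m) = C(m, ⌊m/2⌋) · 2^{−m}`. -/
noncomputable def F' (m : ℕ) : ℝ := (m.choose (m / 2) : ℝ) / 2 ^ m

open Real intervalIntegral Finset

/-- `cb t = C(2t,t)/4^t`. -/
noncomputable def cb (t : ℕ) : ℝ := ((2 * t).choose t : ℝ) / 4 ^ t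

lemma cb_succ (t : ℕ) : cb (t + 1) = cb t * (2 * t + 1) / (2 * t + 2) := by
  have h := Nat.succ_mul_centralBinom_succ t
  simp only [Nat.centralBinom] at h
  have h' : ((t : ℝ) + 1) * ((2 * (t + 1)).choose (t + 1) : ℝ)
      = 2 * (2 * t + 1) * ((2 * t).choose t : ℝ) := by exact_mod_cast h
  have ht : ((t : ℝ) + 1) ≠ 0 := by positivity
  simp only [cb]
  rw [pow_succ]
  field_simp
  linear_combination 2 * h'

lemma prod_eq_cb (t : ℕ) : (∏ i ∈ range t, (2 * (i : ℝ) + 1) / (2 * i + 2)) = cb t := by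
  induction t with
  | zero => simp [cb]
  | succ k ih =>
    rw [Finset.prod_range_succ, ih, cb_succ]
    ring

lemma sin_pow_periodic (m : ℕ) : Function.Periodic (fun x => Real.sin x ^ m) (2 * π) :=
  fun x => by simp [Real.sin_periodic x]

lemma cos_to_sin (m : ℕ) :
    (∫ x in (-π)..π, cos x ^ m) = ∫ x in (-π)..π, sin x ^ m := by
  have h1 : (∫ x in (-π)..π, cos x ^ m) = ∫ x in (-π)..π, sin (x + π / 2) ^ m := by
    congr 1; ext x; rw [Real.sin_add_pi_div_two]
  rw [h1, intervalIntegral.integral_comp_add_right (fun x => Real.sin x ^ m) (π / 2)]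
  have h2 := (sin_pow_periodic m).intervalIntegral_add_eq (-π + π / 2) (-π)
  have e1 : -π + π / 2 + 2 * π = π + π / 2 := by ring
  have e2 : -π + 2 * π = π := by ring
  rw [e1, e2] at h2
  exact h2

lemma sin_neg_part (m : ℕ) :
    (∫ x in (-π)..(0:ℝ), sin x ^ m) = (-1 : ℝ) ^ m * ∫ x in (0:ℝ)..π, sin x ^ m := by
  have := intervalIntegral.integral_comp_neg (a := (0:ℝ)) (b := π) (fun x => Real.sin x ^ m)
  simp only [neg_zero] at this
  rw [← this]
  rw [← intervalIntegral.integral_const_mul]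
  congr 1; ext x
  rw [Real.sin_neg]
  ring

lemma J_split (m : ℕ) :
    (∫ x in (-π)..π, cos x ^ m) = (1 + (-1 : ℝ) ^ m) * ∫ x in (0:ℝ)..π, sin x ^ m := by
  rw [cos_to_sin,
    ← intervalIntegral.integral_add_adjacent_intervals (a := -π) (b := 0) (c := π)
      (by apply Continuous.intervalIntegrable; fun_prop)
      (by apply Continuous.intervalIntegrable; fun_prop),
    sin_neg_part]
  ring

lemma J_even (t : ℕ) : (∫ x in (-π)..π, cos x ^ (2 * t)) = 2 * π * cb t := by
  rw [J_split, integral_sin_pow_even, prod_eq_cb]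
  simp [pow_mul]
  ring

lemma J_odd (t : ℕ) : (∫ x in (-π)..π, cos x ^ (2 * t + 1)) = 0 := by
  rw [J_split]
  simp [pow_mul, pow_succ]

lemma F_int (m : ℕ) :
    (∫ x in (-π)..π, cos x ^ m * (1 + cos x)) = 2 * π * F' m := by
  have hsplit : (∫ x in (-π)..π, cos x ^ m * (1 + cos x))
      = (∫ x in (-π)..π, cos x ^ m) + ∫ x in (-π)..π, cos x ^ (m + 1) := by
    rw [← intervalIntegral.integral_add
      (by apply Continuous.intervalIntegrable; fun_prop)
      (by apply Continuous.intervalIntegrable; fun_prop)]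
    congr 1; ext x; ring
  rcases Nat.even_or_odd m with ⟨t, ht⟩ | ⟨t, ht⟩
  · subst ht
    have h2 : t + t = 2 * t := by ring
    rw [h2] at hsplit ⊢
    rw [hsplit, J_even, J_odd]
    have : (2 * t) / 2 = t := by omega
    simp only [F', cb, this]
    rw [show ((2:ℝ)) ^ (2 * t) = 4 ^ t by rw [pow_mul]; norm_num]
    ring
  · subst ht
    rw [hsplit, show 2 * t + 1 + 1 = 2 * (t + 1) by ring, J_even, J_odd]
    have hd : (2 * t + 1) / 2 = t := by omega
    have hch : ((2 * (t + 1)).choose (t + 1) : ℝ) = 2 * ((2 * t + 1).choose t : ℝ) := by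
      have h : (2 * (t + 1)).choose (t + 1)
          = (2 * t + 1).choose t + (2 * t + 1).choose (t + 1) := by
        rw [show 2 * (t + 1) = (2 * t + 1) + 1 by ring, Nat.choose_succ_succ]
      rw [h, Nat.choose_symm_half]
      push_cast
      ring
    simp only [F', cb, hd]
    rw [hch, show ((2:ℝ)) ^ (2 * t + 1) = 4 ^ t * 2 by rw [pow_succ, pow_mul]; norm_num,
      show (4:ℝ) ^ (t + 1) = 4 ^ t * 4 by ring]
    ring

lemma Cat_int (k : ℕ) :
    (∫ x in (-π)..π, cos x ^ (2 * k) * (1 - cos (2 * x)))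
      = 2 * π * cb k / (k + 1) := by
  have hsplit : (∫ x in (-π)..π, cos x ^ (2 * k) * (1 - cos (2 * x)))
      = 2 * (∫ x in (-π)..π, cos x ^ (2 * k)) - 2 * ∫ x in (-π)..π, cos x ^ (2 * (k + 1)) := by
    rw [← intervalIntegral.integral_const_mul, ← intervalIntegral.integral_const_mul,
      ← intervalIntegral.integral_sub
      (by apply Continuous.intervalIntegrable; fun_prop)
      (by apply Continuous.intervalIntegrable; fun_prop)]
    congr 1; ext x
    rw [Real.cos_two_mul]
    ring
  rw [hsplit, J_even, J_even, cb_succ]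
  have hk : ((k : ℝ) + 1) ≠ 0 := by positivity
  field_simp
  ring

lemma bridge (a b : ℝ) (n : ℕ) :
    (∫ x in (-π)..π, (1 - cos (2 * x)) * (a - b * cos (2 * x)) ^ n)
      = ∫ x in (-π)..π, (1 + cos x) * (a + b * cos x) ^ n := by
  set g : ℝ → ℝ := fun x => (1 - cos x) * (a - b * cos x) ^ n with hg
  have hgc : Continuous g := by fun_prop
  have hper : Function.Periodic g (2 * π) := fun x => by simp [hg, Real.cos_periodic x]
  have hint : ∀ t s : ℝ, IntervalIntegrable g MeasureTheory.volume t s :=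
    fun t s => hgc.intervalIntegrable t s
  have step1 : (∫ x in (-π)..π, g (2 * x)) = ∫ x in (-π)..π, g x := by
    rw [intervalIntegral.integral_comp_mul_left g (two_ne_zero)]
    have hsum : (∫ x in (2 * -π)..(2 * π), g x)
        = (∫ x in (2 * -π)..(0:ℝ), g x) + ∫ x in (0:ℝ)..(2 * π), g x :=
      (intervalIntegral.integral_add_adjacent_intervals (hint _ _) (hint _ _)).symm
    have e1 : (∫ x in (2 * -π)..(0:ℝ), g x) = ∫ x in (-π)..π, g x := by
      have := hper.intervalIntegral_add_eq (2 * -π) (-π)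
      rw [show 2 * -π + 2 * π = 0 by ring, show -π + 2 * π = π by ring] at this
      exact this
    have e2 : (∫ x in (0:ℝ)..(2 * π), g x) = ∫ x in (-π)..π, g x := by
      have := hper.intervalIntegral_add_eq 0 (-π)
      rw [zero_add, show -π + 2 * π = π by ring] at this
      exact this
    rw [hsum, e1, e2]
    simp
    ring
  have step2 : (∫ x in (-π)..π, g x) = ∫ x in (-π)..π, g (x + π) := by
    rw [intervalIntegral.integral_comp_add_right g π]
    have := hper.intervalIntegral_add_eq (-π) (-π + π)
    rw [show -π + 2 * π = π by ring, show -π + π + 2 * π = π + π by ring] at this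
    exact this
  calc (∫ x in (-π)..π, (1 - cos (2 * x)) * (a - b * cos (2 * x)) ^ n)
      = ∫ x in (-π)..π, g (2 * x) := rfl
    _ = ∫ x in (-π)..π, g (x + π) := by rw [step1, step2]
    _ = ∫ x in (-π)..π, (1 + cos x) * (a + b * cos x) ^ n := by
        congr 1; ext x
        simp [hg, Real.cos_add_pi]

/-- For every `n` and real `u`, the expectation of `F` at a binomial `B(n,u)`
variable equals `Σ_{k=0}^n ((−1)^k/(k+1)) C(2k,k) C(n,k) (u/2)^k`. -/
theorem binomial_expectation_eq_alternating_sum (n : ℕ) (u : ℝ) :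
    ∑ j ∈ Finset.range (n + 1), (n.choose j : ℝ) * u ^ j * (1 - u) ^ (n - j) * F' j
      = ∑ k ∈ Finset.range (n + 1),
          (-1) ^ k / (k + 1) * ((2 * k).choose k : ℝ) * (n.choose k : ℝ) * (u / 2) ^ k := by
  have hpi : (2 * π) ≠ 0 := by positivity
  apply mul_left_cancel₀ hpi
  have hL : (2 * π) * (∑ j ∈ range (n + 1),
        (n.choose j : ℝ) * u ^ j * (1 - u) ^ (n - j) * F' j)
      = ∫ x in (-π)..π, (1 + cos x) * ((1 - u) + u * cos x) ^ n := by
    rw [Finset.mul_sum]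
    have hterm : ∀ j ∈ range (n + 1),
        (2 * π) * ((n.choose j : ℝ) * u ^ j * (1 - u) ^ (n - j) * F' j)
          = ∫ x in (-π)..π,
              (n.choose j : ℝ) * u ^ j * (1 - u) ^ (n - j) * (cos x ^ j * (1 + cos x)) := by
      intro j _
      rw [intervalIntegral.integral_const_mul, F_int]
      ring
    rw [Finset.sum_congr rfl hterm,
      ← intervalIntegral.integral_finset_sum
        (fun j _ => by apply Continuous.intervalIntegrable; fun_prop)]
    congr 1; ext x
    rw [show (1 - u) + u * cos x = u * cos x + (1 - u) by ring, add_pow, Finset.mul_sum]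
    refine Finset.sum_congr rfl fun j _ => ?_
    rw [mul_pow]
    ring
  have hR : (2 * π) * (∑ k ∈ range (n + 1),
        (-1 : ℝ) ^ k / (k + 1) * ((2 * k).choose k : ℝ) * (n.choose k : ℝ) * (u / 2) ^ k)
      = ∫ x in (-π)..π, (1 - cos (2 * x)) * ((1 - u) - u * cos (2 * x)) ^ n := by
    rw [Finset.mul_sum]
    have hterm : ∀ k ∈ range (n + 1),
        (2 * π) * ((-1 : ℝ) ^ k / (k + 1) * ((2 * k).choose k : ℝ) * (n.choose k : ℝ)
            * (u / 2) ^ k)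
          = ∫ x in (-π)..π,
              (-2 * u) ^ k * (n.choose k : ℝ) * (cos x ^ (2 * k) * (1 - cos (2 * x))) := by
      intro k _
      rw [intervalIntegral.integral_const_mul, Cat_int]
      have h2 : ((-2 : ℝ) * u) ^ k = (-1) ^ k * 2 ^ k * u ^ k := by
        rw [show (-2 : ℝ) * u = (-1) * (2 * u) by ring, mul_pow, mul_pow]; ring
      have h4 : (4 : ℝ) ^ k = 2 ^ k * 2 ^ k := by rw [← mul_pow]; norm_num
      have hk : ((k : ℝ) + 1) ≠ 0 := by positivity
      have h2k : ((2 : ℝ)) ^ k ≠ 0 := by positivity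
      rw [cb, h2, h4, div_pow]
      field_simp
    rw [Finset.sum_congr rfl hterm,
      ← intervalIntegral.integral_finset_sum
        (fun k _ => by apply Continuous.intervalIntegrable; fun_prop)]
    congr 1; ext x
    have hc : (1 - u) - u * cos (2 * x) = -2 * u * cos x ^ 2 + 1 := by
      rw [Real.cos_two_mul]; ring
    rw [hc, add_pow, Finset.mul_sum]
    refine Finset.sum_congr rfl fun k _ => ?_
    simp only [mul_pow, ← pow_mul, one_pow]
    ring
  rw [hL, hR, bridge]
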